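/- arXiv:2012.07083 — 2 statements merged into one kernel-verified Lean document; each statement's English description precedes it below -/
import Mathlib

section
/- Let f : [0,1] → ℝ be defined by f(x) = 9/10 - (2/5)x. Then f is strictly positive on [0,1], and for all x ∈ [0,1], ∑_{j ∈ {1,2,3,5}} f(1/(j+x)) · (j+x)^{-2t} ≥ 1.0004 · f(x), where t = 3 - √5. -/
private lemma sqrt5_lb : (3571/1597 : ℝ) ≤ Real.sqrt 5 :=
  (Real.le_sqrt' (by norm_num)).mpr (by norm_num)

private lemma sqrt5_ub : Real.sqrt 5 ≤ 5/2 := by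
  nlinarith [Real.sq_sqrt (by norm_num : (0:ℝ) ≤ 5), Real.sqrt_nonneg 5]

private lemma cert (u A : ℝ) (hu : 1 ≤ u) (hA : 0 ≤ A) (h : A^1597 * u^2440 ≤ 1) :
    A ≤ u ^ (-(2*(3 - Real.sqrt 5))) := by
  have hu0 : (0:ℝ) < u := lt_of_lt_of_le one_pos hu
  have hexp : (-(2440/1597) : ℝ) ≤ -(2*(3 - Real.sqrt 5)) := by
    have := sqrt5_lb; nlinarith
  have key : A ≤ u ^ ((-(2440/1597)) : ℝ) := by
    have hpow : (u ^ ((-(2440/1597)) : ℝ)) ^ (1597:ℕ) = (u ^ (2440:ℕ))⁻¹ := by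
      rw [← Real.rpow_natCast (u ^ ((-(2440/1597)):ℝ)) 1597, ← Real.rpow_mul hu0.le]
      rw [show ((-(2440/1597)) * ((1597:ℕ):ℝ)) = ((-2440 : ℤ) : ℝ) by push_cast; ring]
      rw [Real.rpow_intCast, zpow_neg]; norm_cast
    refine le_of_pow_le_pow_left₀ (n := 1597) (by norm_num) (by positivity) ?_
    rw [hpow, ← one_div, le_div_iff₀ (by positivity)]
    exact h
  exact key.trans (Real.rpow_le_rpow_of_exponent_le hu hexp)

private lemma tangent (u0 u A : ℝ) (h1 : 1 ≤ u0) (hu : u0 ≤ u) (hA0 : 0 ≤ A)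
    (hA : A ≤ u0 ^ (-(2*(3 - Real.sqrt 5)))) :
    A * (1 - (2440/1597) * ((u - u0)/u0)) ≤ u ^ (-(2*(3 - Real.sqrt 5))) := by
  have hu00 : (0:ℝ) < u0 := by linarith
  have hu0 : (0:ℝ) < u := by linarith
  set c : ℝ := 2*(3 - Real.sqrt 5) with hc
  have hsq1 : (3571/1597:ℝ) ≤ Real.sqrt 5 := sqrt5_lb
  have hsq2 : Real.sqrt 5 ≤ 5/2 := sqrt5_ub
  have hc1 : 1 ≤ c := by rw [hc]; nlinarith
  have hc2 : c ≤ 2440/1597 := by rw [hc]; nlinarith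
  have hc3 : c ≤ 2 := by rw [hc]; nlinarith
  set s : ℝ := (u - u0)/u0 with hs
  have hs0 : 0 ≤ s := div_nonneg (by linarith) hu00.le
  have h1s : (0:ℝ) < 1 + s := by linarith
  by_cases hcs : 1 - (2440/1597) * s ≤ 0
  · calc A * (1 - 2440/1597 * s) ≤ 0 := mul_nonpos_of_nonneg_of_nonpos hA0 hcs
      _ ≤ u ^ (-c) := Real.rpow_nonneg hu0.le _
  push_neg at hcs
  have hcs' : 0 ≤ 1 - c * s := by nlinarith
  have key : 1 - c*s ≤ (1+s) ^ (-c) := by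
    have hb : (1+s) ^ (c-1) ≤ 1 + (c-1)*s :=
      rpow_one_add_le_one_add_mul_self (by linarith) (by linarith) (by linarith)
    have hmul : (1+s)^c = (1+s)^(c-1) * (1+s) := by
      rw [show c = (c-1)+1 by ring, Real.rpow_add_one h1s.ne' (c-1)]; ring_nf
    have hub : (1+s)^c ≤ (1 + (c-1)*s) * (1+s) := by
      rw [hmul]; exact mul_le_mul_of_nonneg_right hb h1s.le
    have hpos : (0:ℝ) < (1+s)^c := Real.rpow_pos_of_pos h1s c
    rw [Real.rpow_neg h1s.le, ← one_div, le_div_iff₀ hpos]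
    calc (1 - c*s) * (1+s)^c ≤ (1 - c*s) * ((1 + (c-1)*s) * (1+s)) :=
          mul_le_mul_of_nonneg_left hub hcs'
      _ ≤ 1 := by
          have e1 : (0:ℝ) ≤ c*(c-1) := by nlinarith
          nlinarith [mul_nonneg e1 (sq_nonneg s), mul_nonneg (mul_nonneg e1 hs0) (sq_nonneg s), sq_nonneg s]
  have hA' : (0:ℝ) ≤ u0 ^ (-c) := Real.rpow_nonneg hu00.le _
  have humul : u ^ (-c) = u0 ^ (-c) * (1+s)^(-c) := by
    rw [← Real.mul_rpow hu00.le h1s.le]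
    congr 1
    rw [hs]; field_simp; ring
  calc A * (1 - 2440/1597 * s) ≤ u0 ^ (-c) * (1 - c*s) :=
        mul_le_mul hA (by nlinarith) (by linarith) hA'
    _ ≤ u0 ^ (-c) * ((1+s)^(-c)) := mul_le_mul_of_nonneg_left key hA'
    _ = u ^ (-c) := humul.symm

set_option maxHeartbeats 0 in
set_option linter.unreachableTactic false in
set_option linter.unusedTactic false in
private lemma master (a b A1 A2 A3 A5 : ℝ)
    (ha : 0 ≤ a) (hab : a < b)
    (hA1 : 0 ≤ A1) (hA2 : 0 ≤ A2) (hA3 : 0 ≤ A3) (hA5 : 0 ≤ A5)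
    (c1 : A1 ≤ (1+a) ^ (-(2*(3 - Real.sqrt 5)))) (c2 : A2 ≤ (2+a) ^ (-(2*(3 - Real.sqrt 5))))
    (c3 : A3 ≤ (3+a) ^ (-(2*(3 - Real.sqrt 5)))) (c5 : A5 ≤ (5+a) ^ (-(2*(3 - Real.sqrt 5))))
    (hpos : 0 ≤ 1 - (2440/1597) * ((b-a)/(1+a)))
    (e1 : (1.0004 : ℝ) * (9/10 - (2/5)*a) ≤
      (9/10 - (2/5)*(1/(1+a)))*A1 + (9/10 - (2/5)*(1/(2+a)))*A2
      + (9/10 - (2/5)*(1/(3+a)))*A3 + (9/10 - (2/5)*(1/(5+a)))*A5)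
    (e2 : (1.0004 : ℝ) * (9/10 - (2/5)*b) ≤
      (9/10 - (2/5)*(1/(1+b)))*(A1*(1 - (2440/1597)*((b-a)/(1+a))))
      + (9/10 - (2/5)*(1/(2+b)))*(A2*(1 - (2440/1597)*((b-a)/(2+a))))
      + (9/10 - (2/5)*(1/(3+b)))*(A3*(1 - (2440/1597)*((b-a)/(3+a))))
      + (9/10 - (2/5)*(1/(5+b)))*(A5*(1 - (2440/1597)*((b-a)/(5+a)))))
    (x : ℝ) (hax : a ≤ x) (hxb : x ≤ b) :
    (1.0004 : ℝ) * (9/10 - (2/5)*x) ≤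
      (9/10 - (2/5)*(1/(1+x))) * (1+x) ^ (-(2*(3 - Real.sqrt 5)))
      + (9/10 - (2/5)*(1/(2+x))) * (2+x) ^ (-(2*(3 - Real.sqrt 5)))
      + (9/10 - (2/5)*(1/(3+x))) * (3+x) ^ (-(2*(3 - Real.sqrt 5)))
      + (9/10 - (2/5)*(1/(5+x))) * (5+x) ^ (-(2*(3 - Real.sqrt 5))) := by
  have h1a : (0:ℝ) < 1 + a := by linarith
  have h2a : (0:ℝ) < 2 + a := by linarith
  have h3a : (0:ℝ) < 3 + a := by linarith
  have h5a : (0:ℝ) < 5 + a := by linarith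
  have h1b : (0:ℝ) < 1 + b := by linarith
  have h2b : (0:ℝ) < 2 + b := by linarith
  have h3b : (0:ℝ) < 3 + b := by linarith
  have h5b : (0:ℝ) < 5 + b := by linarith
  have h1x : (0:ℝ) < 1 + x := by linarith
  have h2x : (0:ℝ) < 2 + x := by linarith
  have h3x : (0:ℝ) < 3 + x := by linarith
  have h5x : (0:ℝ) < 5 + x := by linarith
  -- tangent bounds
  have ht1 : A1 * (1 - (2440/1597) * ((x - a)/(1+a))) ≤ (1+x) ^ (-(2*(3 - Real.sqrt 5))) := by
    have := tangent (1+a) (1+x) A1 (by linarith) (by linarith) hA1 c1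
    rwa [show (1+x) - (1+a) = x - a by ring] at this
  have ht2 : A2 * (1 - (2440/1597) * ((x - a)/(2+a))) ≤ (2+x) ^ (-(2*(3 - Real.sqrt 5))) := by
    have := tangent (2+a) (2+x) A2 (by linarith) (by linarith) hA2 c2
    rwa [show (2+x) - (2+a) = x - a by ring] at this
  have ht3 : A3 * (1 - (2440/1597) * ((x - a)/(3+a))) ≤ (3+x) ^ (-(2*(3 - Real.sqrt 5))) := by
    have := tangent (3+a) (3+x) A3 (by linarith) (by linarith) hA3 c3
    rwa [show (3+x) - (3+a) = x - a by ring] at this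
  have ht5 : A5 * (1 - (2440/1597) * ((x - a)/(5+a))) ≤ (5+x) ^ (-(2*(3 - Real.sqrt 5))) := by
    have := tangent (5+a) (5+x) A5 (by linarith) (by linarith) hA5 c5
    rwa [show (5+x) - (5+a) = x - a by ring] at this
  -- nonnegativity of tangent factors
  have hq1 : 0 ≤ 1 - (2440/1597) * ((x - a)/(1+a)) := by
    have : (x-a)/(1+a) ≤ (b-a)/(1+a) := by gcongr <;> linarith
    linarith only [this, hpos]
  have hq2 : 0 ≤ 1 - (2440/1597) * ((x - a)/(2+a)) := by
    have : (x-a)/(2+a) ≤ (b-a)/(1+a) := by gcongr <;> linarith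
    linarith only [this, hpos]
  have hq3 : 0 ≤ 1 - (2440/1597) * ((x - a)/(3+a)) := by
    have : (x-a)/(3+a) ≤ (b-a)/(1+a) := by gcongr <;> linarith
    linarith only [this, hpos]
  have hq5 : 0 ≤ 1 - (2440/1597) * ((x - a)/(5+a)) := by
    have : (x-a)/(5+a) ≤ (b-a)/(1+a) := by gcongr <;> linarith
    linarith only [this, hpos]
  -- chord bounds on the f-factor
  obtain ⟨r1, hr1⟩ : ∃ v:ℝ, v = (2/5)/((1+a)*(1+b)) := ⟨_, rfl⟩
  obtain ⟨r2, hr2⟩ : ∃ v:ℝ, v = (2/5)/((2+a)*(2+b)) := ⟨_, rfl⟩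
  obtain ⟨r3, hr3⟩ : ∃ v:ℝ, v = (2/5)/((3+a)*(3+b)) := ⟨_, rfl⟩
  obtain ⟨r5, hr5⟩ : ∃ v:ℝ, v = (2/5)/((5+a)*(5+b)) := ⟨_, rfl⟩
  obtain ⟨q1, hq1d⟩ : ∃ v:ℝ, v = 9/10 - (2/5)*(1/(1+a)) - r1*a := ⟨_, rfl⟩
  obtain ⟨q2, hq2d⟩ : ∃ v:ℝ, v = 9/10 - (2/5)*(1/(2+a)) - r2*a := ⟨_, rfl⟩
  obtain ⟨q3, hq3d⟩ : ∃ v:ℝ, v = 9/10 - (2/5)*(1/(3+a)) - r3*a := ⟨_, rfl⟩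
  obtain ⟨q5, hq5d⟩ : ∃ v:ℝ, v = 9/10 - (2/5)*(1/(5+a)) - r5*a := ⟨_, rfl⟩
  have hr1p : 0 ≤ r1 := by rw [hr1]; positivity
  have hr2p : 0 ≤ r2 := by rw [hr2]; positivity
  have hr3p : 0 ≤ r3 := by rw [hr3]; positivity
  have hr5p : 0 ≤ r5 := by rw [hr5]; positivity
  have hch1 : q1 + r1*x ≤ 9/10 - (2/5)*(1/(1+x)) := by
    have key : 9/10 - (2/5)*(1/(1+x)) - (q1 + r1*x)
        = (2/5)*((x-a)*(b-x))/((1+a)*((1+b)*(1+x))) := by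
      rw [hq1d, hr1]; field_simp; ring
    linarith only [key, div_nonneg (mul_nonneg (by norm_num : (0:ℝ) ≤ 2/5) (mul_nonneg (sub_nonneg.2 hax) (sub_nonneg.2 hxb))) (mul_pos h1a (mul_pos h1b h1x)).le]
  have hch2 : q2 + r2*x ≤ 9/10 - (2/5)*(1/(2+x)) := by
    have key : 9/10 - (2/5)*(1/(2+x)) - (q2 + r2*x)
        = (2/5)*((x-a)*(b-x))/((2+a)*((2+b)*(2+x))) := by
      rw [hq2d, hr2]; field_simp; ring
    linarith only [key, div_nonneg (mul_nonneg (by norm_num : (0:ℝ) ≤ 2/5) (mul_nonneg (sub_nonneg.2 hax) (sub_nonneg.2 hxb))) (mul_pos h2a (mul_pos h2b h2x)).le]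
  have hch3 : q3 + r3*x ≤ 9/10 - (2/5)*(1/(3+x)) := by
    have key : 9/10 - (2/5)*(1/(3+x)) - (q3 + r3*x)
        = (2/5)*((x-a)*(b-x))/((3+a)*((3+b)*(3+x))) := by
      rw [hq3d, hr3]; field_simp; ring
    linarith only [key, div_nonneg (mul_nonneg (by norm_num : (0:ℝ) ≤ 2/5) (mul_nonneg (sub_nonneg.2 hax) (sub_nonneg.2 hxb))) (mul_pos h3a (mul_pos h3b h3x)).le]
  have hch5 : q5 + r5*x ≤ 9/10 - (2/5)*(1/(5+x)) := by
    have key : 9/10 - (2/5)*(1/(5+x)) - (q5 + r5*x)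
        = (2/5)*((x-a)*(b-x))/((5+a)*((5+b)*(5+x))) := by
      rw [hq5d, hr5]; field_simp; ring
    linarith only [key, div_nonneg (mul_nonneg (by norm_num : (0:ℝ) ≤ 2/5) (mul_nonneg (sub_nonneg.2 hax) (sub_nonneg.2 hxb))) (mul_pos h5a (mul_pos h5b h5x)).le]
  -- f-factor nonneg
  have hf1 : (0:ℝ) ≤ 9/10 - (2/5)*(1/(1+x)) := by
    have : 1/(1+x) ≤ 1 := by rw [div_le_one h1x]; linarith only [ha, hax]
    linarith only [this]
  have hf2 : (0:ℝ) ≤ 9/10 - (2/5)*(1/(2+x)) := by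
    have : 1/(2+x) ≤ 1 := by rw [div_le_one h2x]; linarith only [ha, hax]
    linarith only [this]
  have hf3 : (0:ℝ) ≤ 9/10 - (2/5)*(1/(3+x)) := by
    have : 1/(3+x) ≤ 1 := by rw [div_le_one h3x]; linarith only [ha, hax]
    linarith only [this]
  have hf5 : (0:ℝ) ≤ 9/10 - (2/5)*(1/(5+x)) := by
    have : 1/(5+x) ≤ 1 := by rw [div_le_one h5x]; linarith only [ha, hax]
    linarith only [this]
  -- term-wise products
  have hT1 : (q1 + r1*x) * (A1 * (1 - (2440/1597) * ((x - a)/(1+a))))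
      ≤ (9/10 - (2/5)*(1/(1+x))) * (1+x) ^ (-(2*(3 - Real.sqrt 5))) :=
    mul_le_mul hch1 ht1 (mul_nonneg hA1 hq1) hf1
  have hT2 : (q2 + r2*x) * (A2 * (1 - (2440/1597) * ((x - a)/(2+a))))
      ≤ (9/10 - (2/5)*(1/(2+x))) * (2+x) ^ (-(2*(3 - Real.sqrt 5))) :=
    mul_le_mul hch2 ht2 (mul_nonneg hA2 hq2) hf2
  have hT3 : (q3 + r3*x) * (A3 * (1 - (2440/1597) * ((x - a)/(3+a))))
      ≤ (9/10 - (2/5)*(1/(3+x))) * (3+x) ^ (-(2*(3 - Real.sqrt 5))) :=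
    mul_le_mul hch3 ht3 (mul_nonneg hA3 hq3) hf3
  have hT5 : (q5 + r5*x) * (A5 * (1 - (2440/1597) * ((x - a)/(5+a))))
      ≤ (9/10 - (2/5)*(1/(5+x))) * (5+x) ^ (-(2*(3 - Real.sqrt 5))) :=
    mul_le_mul hch5 ht5 (mul_nonneg hA5 hq5) hf5
  -- quadratic lower bound step: endpoints
  have hSa : (1.0004 : ℝ) * (9/10 - (2/5)*a) ≤
      (q1 + r1*a) * (A1 * (1 - (2440/1597) * ((a - a)/(1+a))))
      + (q2 + r2*a) * (A2 * (1 - (2440/1597) * ((a - a)/(2+a))))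
      + (q3 + r3*a) * (A3 * (1 - (2440/1597) * ((a - a)/(3+a))))
      + (q5 + r5*a) * (A5 * (1 - (2440/1597) * ((a - a)/(5+a)))) := by
    have eq1 : q1 + r1*a = 9/10 - (2/5)*(1/(1+a)) := by rw [hq1d]; ring
    have eq2 : q2 + r2*a = 9/10 - (2/5)*(1/(2+a)) := by rw [hq2d]; ring
    have eq3 : q3 + r3*a = 9/10 - (2/5)*(1/(3+a)) := by rw [hq3d]; ring
    have eq5 : q5 + r5*a = 9/10 - (2/5)*(1/(5+a)) := by rw [hq5d]; ring
    rw [eq1, eq2, eq3, eq5]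
    simp only [sub_self, zero_div, mul_zero, sub_zero, mul_one]
    exact e1
  have hSb : (1.0004 : ℝ) * (9/10 - (2/5)*b) ≤
      (q1 + r1*b) * (A1 * (1 - (2440/1597) * ((b - a)/(1+a))))
      + (q2 + r2*b) * (A2 * (1 - (2440/1597) * ((b - a)/(2+a))))
      + (q3 + r3*b) * (A3 * (1 - (2440/1597) * ((b - a)/(3+a))))
      + (q5 + r5*b) * (A5 * (1 - (2440/1597) * ((b - a)/(5+a)))) := by
    have eq1 : q1 + r1*b = 9/10 - (2/5)*(1/(1+b)) := by
      rw [hq1d, hr1]; field_simp; ring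
    have eq2 : q2 + r2*b = 9/10 - (2/5)*(1/(2+b)) := by
      rw [hq2d, hr2]; field_simp; ring
    have eq3 : q3 + r3*b = 9/10 - (2/5)*(1/(3+b)) := by
      rw [hq3d, hr3]; field_simp; ring
    have eq5 : q5 + r5*b = 9/10 - (2/5)*(1/(5+b)) := by
      rw [hq5d, hr5]; field_simp; ring
    rw [eq1, eq2, eq3, eq5]
    exact e2
  -- concavity: S(x) ≥ interpolation
  have hK : (0:ℝ) ≤ (2440/1597) * (r1*A1/(1+a) + r2*A2/(2+a) + r3*A3/(3+a) + r5*A5/(5+a)) := by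
    have := mul_nonneg hr1p hA1
    have := mul_nonneg hr2p hA2
    have := mul_nonneg hr3p hA3
    have := mul_nonneg hr5p hA5
    positivity
  have hid : (b-a) * ((q1 + r1*x) * (A1 * (1 - (2440/1597) * ((x - a)/(1+a))))
      + (q2 + r2*x) * (A2 * (1 - (2440/1597) * ((x - a)/(2+a))))
      + (q3 + r3*x) * (A3 * (1 - (2440/1597) * ((x - a)/(3+a))))
      + (q5 + r5*x) * (A5 * (1 - (2440/1597) * ((x - a)/(5+a))))
      - (1.0004 : ℝ) * (9/10 - (2/5)*x))
      = (b-x) * ((q1 + r1*a) * (A1 * (1 - (2440/1597) * ((a - a)/(1+a))))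
      + (q2 + r2*a) * (A2 * (1 - (2440/1597) * ((a - a)/(2+a))))
      + (q3 + r3*a) * (A3 * (1 - (2440/1597) * ((a - a)/(3+a))))
      + (q5 + r5*a) * (A5 * (1 - (2440/1597) * ((a - a)/(5+a))))
      - (1.0004 : ℝ) * (9/10 - (2/5)*a))
      + (x-a) * ((q1 + r1*b) * (A1 * (1 - (2440/1597) * ((b - a)/(1+a))))
      + (q2 + r2*b) * (A2 * (1 - (2440/1597) * ((b - a)/(2+a))))
      + (q3 + r3*b) * (A3 * (1 - (2440/1597) * ((b - a)/(3+a))))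
      + (q5 + r5*b) * (A5 * (1 - (2440/1597) * ((b - a)/(5+a))))
      - (1.0004 : ℝ) * (9/10 - (2/5)*b))
      + (x-a) * ((b-x) * ((b-a) *
        ((2440/1597) * (r1*A1/(1+a) + r2*A2/(2+a) + r3*A3/(3+a) + r5*A5/(5+a))))) := by
    ring
  have hnn : 0 ≤ (b-a) * ((q1 + r1*x) * (A1 * (1 - (2440/1597) * ((x - a)/(1+a))))
      + (q2 + r2*x) * (A2 * (1 - (2440/1597) * ((x - a)/(2+a))))
      + (q3 + r3*x) * (A3 * (1 - (2440/1597) * ((x - a)/(3+a))))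
      + (q5 + r5*x) * (A5 * (1 - (2440/1597) * ((x - a)/(5+a))))
      - (1.0004 : ℝ) * (9/10 - (2/5)*x)) := by
    rw [hid]
    have t1 : 0 ≤ (b-x) := by linarith
    have t2 : 0 ≤ (x-a) := by linarith
    have t3 : 0 ≤ (b-a) := by linarith
    have s1 := sub_nonneg.2 hSa
    have s2 := sub_nonneg.2 hSb
    have w1 := mul_nonneg t1 s1
    have w2 := mul_nonneg t2 s2
    have w3 := mul_nonneg t2 (mul_nonneg t1 (mul_nonneg t3 hK))
    linarith only [w1, w2, w3]
  have hS : (1.0004 : ℝ) * (9/10 - (2/5)*x) ≤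
      (q1 + r1*x) * (A1 * (1 - (2440/1597) * ((x - a)/(1+a))))
      + (q2 + r2*x) * (A2 * (1 - (2440/1597) * ((x - a)/(2+a))))
      + (q3 + r3*x) * (A3 * (1 - (2440/1597) * ((x - a)/(3+a))))
      + (q5 + r5*x) * (A5 * (1 - (2440/1597) * ((x - a)/(5+a)))) := by
    have := (mul_nonneg_iff_of_pos_left (sub_pos.2 hab)).mp hnn
    linarith only [this]
  linarith only [hT1, hT2, hT3, hT5, hS]

set_option maxHeartbeats 0 in
theorem stmt2 :
    let t : ℝ := 3 - Real.sqrt 5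
    let f : ℝ → ℝ := fun x => 9/10 - (2/5) * x
    (∀ x ∈ Set.Icc (0:ℝ) 1, 0 < f x) ∧
    (∀ x ∈ Set.Icc (0:ℝ) 1,
      (1.0004 : ℝ) * f x ≤
        ∑ j ∈ ({1, 2, 3, 5} : Finset ℕ), f (1 / ((j:ℝ) + x)) * ((j:ℝ) + x) ^ (-(2 * t))) := by
  show (∀ x ∈ Set.Icc (0:ℝ) 1, 0 < 9/10 - (2/5) * x) ∧
    (∀ x ∈ Set.Icc (0:ℝ) 1,
      (1.0004 : ℝ) * (9/10 - (2/5) * x) ≤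
        ∑ j ∈ ({1, 2, 3, 5} : Finset ℕ),
          (9/10 - (2/5) * (1 / ((j:ℝ) + x))) * ((j:ℝ) + x) ^ (-(2 * (3 - Real.sqrt 5))))
  constructor
  · rintro x ⟨hx0, hx1⟩
    linarith
  rintro x ⟨hx0, hx1⟩
  rw [show ({1,2,3,5} : Finset ℕ) = insert 1 (insert 2 (insert 3 {5})) from rfl,
    Finset.sum_insert (by decide), Finset.sum_insert (by decide),
    Finset.sum_insert (by decide), Finset.sum_singleton]
  push_cast
  have goal_form : ∀ y : ℝ,
      (1.0004 : ℝ) * (9/10 - (2/5)*y) ≤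
      (9/10 - (2/5)*(1/(1+y))) * (1+y) ^ (-(2*(3 - Real.sqrt 5)))
      + (9/10 - (2/5)*(1/(2+y))) * (2+y) ^ (-(2*(3 - Real.sqrt 5)))
      + (9/10 - (2/5)*(1/(3+y))) * (3+y) ^ (-(2*(3 - Real.sqrt 5)))
      + (9/10 - (2/5)*(1/(5+y))) * (5+y) ^ (-(2*(3 - Real.sqrt 5)))
      → (1.0004 : ℝ) * (9/10 - 2/5 * y) ≤
        (9/10 - 2/5 * (1/(1+y))) * (1+y) ^ (-(2*(3 - Real.sqrt 5)))
        + ((9/10 - 2/5 * (1/(2+y))) * (2+y) ^ (-(2*(3 - Real.sqrt 5)))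
        + ((9/10 - 2/5 * (1/(3+y))) * (3+y) ^ (-(2*(3 - Real.sqrt 5)))
        + (9/10 - 2/5 * (1/(5+y))) * (5+y) ^ (-(2*(3 - Real.sqrt 5))))) := by
    intro y h; linarith
  rcases le_total x (4/25 : ℝ) with h1|h1
  · exact goal_form x (master (0:ℝ) (4/25 : ℝ) (1:ℝ) (138716101/400000000 : ℝ) (116654977/625000000 : ℝ) (855201337/10000000000 : ℝ)
      (by norm_num) (by norm_num) (by norm_num) (by norm_num) (by norm_num) (by norm_num)
      (cert (1+(0:ℝ)) (1:ℝ) (by norm_num) (by norm_num) (by norm_num))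
      (cert (2+(0:ℝ)) (138716101/400000000 : ℝ) (by norm_num) (by norm_num) (by rw [show (1597:ℕ) = 7*228+1 by norm_num, show (2440:ℕ) = 10*244 by norm_num, pow_succ, pow_mul, pow_mul]; norm_num))
      (cert (3+(0:ℝ)) (116654977/625000000 : ℝ) (by norm_num) (by norm_num) (by rw [show (1597:ℕ) = 7*228+1 by norm_num, show (2440:ℕ) = 10*244 by norm_num, pow_succ, pow_mul, pow_mul]; norm_num))
      (cert (5+(0:ℝ)) (855201337/10000000000 : ℝ) (by norm_num) (by norm_num) (by rw [show (1597:ℕ) = 7*228+1 by norm_num, show (2440:ℕ) = 10*244 by norm_num, pow_succ, pow_mul, pow_mul]; norm_num))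
      (by norm_num) (by norm_num) (by norm_num) x hx0 h1)
  rcases le_total x (571/2000 : ℝ) with h2|h2
  · exact goal_form x (master (4/25 : ℝ) (571/2000 : ℝ) (7971075279/10000000000 : ℝ) (308318727/1000000000 : ℝ) (862016793/5000000000 : ℝ) (815018833/10000000000 : ℝ)
      (by norm_num) (by norm_num) (by norm_num) (by norm_num) (by norm_num) (by norm_num)
      (cert (1+(4/25 : ℝ)) (7971075279/10000000000 : ℝ) (by norm_num) (by norm_num) (by rw [show (1597:ℕ) = 7*228+1 by norm_num, show (2440:ℕ) = 10*244 by norm_num, pow_succ, pow_mul, pow_mul]; norm_num))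
      (cert (2+(4/25 : ℝ)) (308318727/1000000000 : ℝ) (by norm_num) (by norm_num) (by rw [show (1597:ℕ) = 7*228+1 by norm_num, show (2440:ℕ) = 10*244 by norm_num, pow_succ, pow_mul, pow_mul]; norm_num))
      (cert (3+(4/25 : ℝ)) (862016793/5000000000 : ℝ) (by norm_num) (by norm_num) (by rw [show (1597:ℕ) = 7*228+1 by norm_num, show (2440:ℕ) = 10*244 by norm_num, pow_succ, pow_mul, pow_mul]; norm_num))
      (cert (5+(4/25 : ℝ)) (815018833/10000000000 : ℝ) (by norm_num) (by norm_num) (by rw [show (1597:ℕ) = 7*228+1 by norm_num, show (2440:ℕ) = 10*244 by norm_num, pow_succ, pow_mul, pow_mul]; norm_num))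
      (by norm_num) (by norm_num) (by norm_num) x h1 h2)
  rcases le_total x (187/500 : ℝ) with h3|h3
  · exact goal_form x (master (571/2000 : ℝ) (187/500 : ℝ) (3406611569/5000000000 : ℝ) (707074621/2500000000 : ℝ) (324887363/2000000000 : ℝ) (6285101/80000000 : ℝ)
      (by norm_num) (by norm_num) (by norm_num) (by norm_num) (by norm_num) (by norm_num)
      (cert (1+(571/2000 : ℝ)) (3406611569/5000000000 : ℝ) (by norm_num) (by norm_num) (by rw [show (1597:ℕ) = 7*228+1 by norm_num, show (2440:ℕ) = 10*244 by norm_num, pow_succ, pow_mul, pow_mul]; norm_num))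
      (cert (2+(571/2000 : ℝ)) (707074621/2500000000 : ℝ) (by norm_num) (by norm_num) (by rw [show (1597:ℕ) = 7*228+1 by norm_num, show (2440:ℕ) = 10*244 by norm_num, pow_succ, pow_mul, pow_mul]; norm_num))
      (cert (3+(571/2000 : ℝ)) (324887363/2000000000 : ℝ) (by norm_num) (by norm_num) (by rw [show (1597:ℕ) = 7*228+1 by norm_num, show (2440:ℕ) = 10*244 by norm_num, pow_succ, pow_mul, pow_mul]; norm_num))
      (cert (5+(571/2000 : ℝ)) (6285101/80000000 : ℝ) (by norm_num) (by norm_num) (by rw [show (1597:ℕ) = 7*228+1 by norm_num, show (2440:ℕ) = 10*244 by norm_num, pow_succ, pow_mul, pow_mul]; norm_num))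
      (by norm_num) (by norm_num) (by norm_num) x h2 h3)
  rcases le_total x (173/400 : ℝ) with h4|h4
  · exact goal_form x (master (187/500 : ℝ) (173/400 : ℝ) (6154247183/10000000000 : ℝ) (2668801377/10000000000 : ℝ) (1559788643/10000000000 : ℝ) (38297811/500000000 : ℝ)
      (by norm_num) (by norm_num) (by norm_num) (by norm_num) (by norm_num) (by norm_num)
      (cert (1+(187/500 : ℝ)) (6154247183/10000000000 : ℝ) (by norm_num) (by norm_num) (by rw [show (1597:ℕ) = 7*228+1 by norm_num, show (2440:ℕ) = 10*244 by norm_num, pow_succ, pow_mul, pow_mul]; norm_num))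
      (cert (2+(187/500 : ℝ)) (2668801377/10000000000 : ℝ) (by norm_num) (by norm_num) (by rw [show (1597:ℕ) = 7*228+1 by norm_num, show (2440:ℕ) = 10*244 by norm_num, pow_succ, pow_mul, pow_mul]; norm_num))
      (cert (3+(187/500 : ℝ)) (1559788643/10000000000 : ℝ) (by norm_num) (by norm_num) (by rw [show (1597:ℕ) = 7*228+1 by norm_num, show (2440:ℕ) = 10*244 by norm_num, pow_succ, pow_mul, pow_mul]; norm_num))
      (cert (5+(187/500 : ℝ)) (38297811/500000000 : ℝ) (by norm_num) (by norm_num) (by rw [show (1597:ℕ) = 7*228+1 by norm_num, show (2440:ℕ) = 10*244 by norm_num, pow_succ, pow_mul, pow_mul]; norm_num))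
      (by norm_num) (by norm_num) (by norm_num) x h3 h4)
  rcases le_total x (469/1000 : ℝ) with h5|h5
  · exact goal_form x (master (173/400 : ℝ) (469/1000 : ℝ) (1154884393/2000000000 : ℝ) (1285681711/5000000000 : ℝ) (1519355943/10000000000 : ℝ) (753389939/10000000000 : ℝ)
      (by norm_num) (by norm_num) (by norm_num) (by norm_num) (by norm_num) (by norm_num)
      (cert (1+(173/400 : ℝ)) (1154884393/2000000000 : ℝ) (by norm_num) (by norm_num) (by rw [show (1597:ℕ) = 7*228+1 by norm_num, show (2440:ℕ) = 10*244 by norm_num, pow_succ, pow_mul, pow_mul]; norm_num))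
      (cert (2+(173/400 : ℝ)) (1285681711/5000000000 : ℝ) (by norm_num) (by norm_num) (by rw [show (1597:ℕ) = 7*228+1 by norm_num, show (2440:ℕ) = 10*244 by norm_num, pow_succ, pow_mul, pow_mul]; norm_num))
      (cert (3+(173/400 : ℝ)) (1519355943/10000000000 : ℝ) (by norm_num) (by norm_num) (by rw [show (1597:ℕ) = 7*228+1 by norm_num, show (2440:ℕ) = 10*244 by norm_num, pow_succ, pow_mul, pow_mul]; norm_num))
      (cert (5+(173/400 : ℝ)) (753389939/10000000000 : ℝ) (by norm_num) (by norm_num) (by rw [show (1597:ℕ) = 7*228+1 by norm_num, show (2440:ℕ) = 10*244 by norm_num, pow_succ, pow_mul, pow_mul]; norm_num))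
      (by norm_num) (by norm_num) (by norm_num) x h4 h5)
  rcases le_total x (983/2000 : ℝ) with h6|h6
  · exact goal_form x (master (469/1000 : ℝ) (983/2000 : ℝ) (5556653119/10000000000 : ℝ) (2513511429/10000000000 : ℝ) (1494998973/10000000000 : ℝ) (745721213/10000000000 : ℝ)
      (by norm_num) (by norm_num) (by norm_num) (by norm_num) (by norm_num) (by norm_num)
      (cert (1+(469/1000 : ℝ)) (5556653119/10000000000 : ℝ) (by norm_num) (by norm_num) (by rw [show (1597:ℕ) = 7*228+1 by norm_num, show (2440:ℕ) = 10*244 by norm_num, pow_succ, pow_mul, pow_mul]; norm_num))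
      (cert (2+(469/1000 : ℝ)) (2513511429/10000000000 : ℝ) (by norm_num) (by norm_num) (by rw [show (1597:ℕ) = 7*228+1 by norm_num, show (2440:ℕ) = 10*244 by norm_num, pow_succ, pow_mul, pow_mul]; norm_num))
      (cert (3+(469/1000 : ℝ)) (1494998973/10000000000 : ℝ) (by norm_num) (by norm_num) (by rw [show (1597:ℕ) = 7*228+1 by norm_num, show (2440:ℕ) = 10*244 by norm_num, pow_succ, pow_mul, pow_mul]; norm_num))
      (cert (5+(469/1000 : ℝ)) (745721213/10000000000 : ℝ) (by norm_num) (by norm_num) (by rw [show (1597:ℕ) = 7*228+1 by norm_num, show (2440:ℕ) = 10*244 by norm_num, pow_succ, pow_mul, pow_mul]; norm_num))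
      (by norm_num) (by norm_num) (by norm_num) x h5 h6)
  rcases le_total x (1011/2000 : ℝ) with h7|h7
  · exact goal_form x (master (983/2000 : ℝ) (1011/2000 : ℝ) (5429091303/10000000000 : ℝ) (495782709/2000000000 : ℝ) (59212177/400000000 : ℝ) (741058027/10000000000 : ℝ)
      (by norm_num) (by norm_num) (by norm_num) (by norm_num) (by norm_num) (by norm_num)
      (cert (1+(983/2000 : ℝ)) (5429091303/10000000000 : ℝ) (by norm_num) (by norm_num) (by rw [show (1597:ℕ) = 7*228+1 by norm_num, show (2440:ℕ) = 10*244 by norm_num, pow_succ, pow_mul, pow_mul]; norm_num))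
      (cert (2+(983/2000 : ℝ)) (495782709/2000000000 : ℝ) (by norm_num) (by norm_num) (by rw [show (1597:ℕ) = 7*228+1 by norm_num, show (2440:ℕ) = 10*244 by norm_num, pow_succ, pow_mul, pow_mul]; norm_num))
      (cert (3+(983/2000 : ℝ)) (59212177/400000000 : ℝ) (by norm_num) (by norm_num) (by rw [show (1597:ℕ) = 7*228+1 by norm_num, show (2440:ℕ) = 10*244 by norm_num, pow_succ, pow_mul, pow_mul]; norm_num))
      (cert (5+(983/2000 : ℝ)) (741058027/10000000000 : ℝ) (by norm_num) (by norm_num) (by rw [show (1597:ℕ) = 7*228+1 by norm_num, show (2440:ℕ) = 10*244 by norm_num, pow_succ, pow_mul, pow_mul]; norm_num))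
      (by norm_num) (by norm_num) (by norm_num) x h6 h7)
  rcases le_total x (257/500 : ℝ) with h8|h8
  · exact goal_form x (master (1011/2000 : ℝ) (257/500 : ℝ) (1338036127/2500000000 : ℝ) (614445413/2500000000 : ℝ) (735640663/5000000000 : ℝ) (738180783/10000000000 : ℝ)
      (by norm_num) (by norm_num) (by norm_num) (by norm_num) (by norm_num) (by norm_num)
      (cert (1+(1011/2000 : ℝ)) (1338036127/2500000000 : ℝ) (by norm_num) (by norm_num) (by rw [show (1597:ℕ) = 7*228+1 by norm_num, show (2440:ℕ) = 10*244 by norm_num, pow_succ, pow_mul, pow_mul]; norm_num))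
      (cert (2+(1011/2000 : ℝ)) (614445413/2500000000 : ℝ) (by norm_num) (by norm_num) (by rw [show (1597:ℕ) = 7*228+1 by norm_num, show (2440:ℕ) = 10*244 by norm_num, pow_succ, pow_mul, pow_mul]; norm_num))
      (cert (3+(1011/2000 : ℝ)) (735640663/5000000000 : ℝ) (by norm_num) (by norm_num) (by rw [show (1597:ℕ) = 7*228+1 by norm_num, show (2440:ℕ) = 10*244 by norm_num, pow_succ, pow_mul, pow_mul]; norm_num))
      (cert (5+(1011/2000 : ℝ)) (738180783/10000000000 : ℝ) (by norm_num) (by norm_num) (by rw [show (1597:ℕ) = 7*228+1 by norm_num, show (2440:ℕ) = 10*244 by norm_num, pow_succ, pow_mul, pow_mul]; norm_num))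
      (by norm_num) (by norm_num) (by norm_num) x h7 h8)
  rcases le_total x (13/25 : ℝ) with h9|h9
  · exact goal_form x (master (257/500 : ℝ) (13/25 : ℝ) (1061260551/2000000000 : ℝ) (2445096551/10000000000 : ℝ) (1465847317/10000000000 : ℝ) (73644289/1000000000 : ℝ)
      (by norm_num) (by norm_num) (by norm_num) (by norm_num) (by norm_num) (by norm_num)
      (cert (1+(257/500 : ℝ)) (1061260551/2000000000 : ℝ) (by norm_num) (by norm_num) (by rw [show (1597:ℕ) = 7*228+1 by norm_num, show (2440:ℕ) = 10*244 by norm_num, pow_succ, pow_mul, pow_mul]; norm_num))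
      (cert (2+(257/500 : ℝ)) (2445096551/10000000000 : ℝ) (by norm_num) (by norm_num) (by rw [show (1597:ℕ) = 7*228+1 by norm_num, show (2440:ℕ) = 10*244 by norm_num, pow_succ, pow_mul, pow_mul]; norm_num))
      (cert (3+(257/500 : ℝ)) (1465847317/10000000000 : ℝ) (by norm_num) (by norm_num) (by rw [show (1597:ℕ) = 7*228+1 by norm_num, show (2440:ℕ) = 10*244 by norm_num, pow_succ, pow_mul, pow_mul]; norm_num))
      (cert (5+(257/500 : ℝ)) (73644289/1000000000 : ℝ) (by norm_num) (by norm_num) (by rw [show (1597:ℕ) = 7*228+1 by norm_num, show (2440:ℕ) = 10*244 by norm_num, pow_succ, pow_mul, pow_mul]; norm_num))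
      (by norm_num) (by norm_num) (by norm_num) x h8 h9)
  rcases le_total x (263/500 : ℝ) with h10|h10
  · exact goal_form x (master (13/25 : ℝ) (263/500 : ℝ) (5274333567/10000000000 : ℝ) (609051859/2500000000 : ℝ) (1462031507/10000000000 : ℝ) (367610107/5000000000 : ℝ)
      (by norm_num) (by norm_num) (by norm_num) (by norm_num) (by norm_num) (by norm_num)
      (cert (1+(13/25 : ℝ)) (5274333567/10000000000 : ℝ) (by norm_num) (by norm_num) (by rw [show (1597:ℕ) = 7*228+1 by norm_num, show (2440:ℕ) = 10*244 by norm_num, pow_succ, pow_mul, pow_mul]; norm_num))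
      (cert (2+(13/25 : ℝ)) (609051859/2500000000 : ℝ) (by norm_num) (by norm_num) (by rw [show (1597:ℕ) = 7*228+1 by norm_num, show (2440:ℕ) = 10*244 by norm_num, pow_succ, pow_mul, pow_mul]; norm_num))
      (cert (3+(13/25 : ℝ)) (1462031507/10000000000 : ℝ) (by norm_num) (by norm_num) (by rw [show (1597:ℕ) = 7*228+1 by norm_num, show (2440:ℕ) = 10*244 by norm_num, pow_succ, pow_mul, pow_mul]; norm_num))
      (cert (5+(13/25 : ℝ)) (367610107/5000000000 : ℝ) (by norm_num) (by norm_num) (by rw [show (1597:ℕ) = 7*228+1 by norm_num, show (2440:ℕ) = 10*244 by norm_num, pow_succ, pow_mul, pow_mul]; norm_num))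
      (by norm_num) (by norm_num) (by norm_num) x h9 h10)
  rcases le_total x (43/80 : ℝ) with h11|h11
  · exact goal_form x (master (263/500 : ℝ) (43/80 : ℝ) (1048536359/2000000000 : ℝ) (1213685831/5000000000 : ℝ) (182279013/1250000000 : ℝ) (183500223/2500000000 : ℝ)
      (by norm_num) (by norm_num) (by norm_num) (by norm_num) (by norm_num) (by norm_num)
      (cert (1+(263/500 : ℝ)) (1048536359/2000000000 : ℝ) (by norm_num) (by norm_num) (by rw [show (1597:ℕ) = 7*228+1 by norm_num, show (2440:ℕ) = 10*244 by norm_num, pow_succ, pow_mul, pow_mul]; norm_num))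
      (cert (2+(263/500 : ℝ)) (1213685831/5000000000 : ℝ) (by norm_num) (by norm_num) (by rw [show (1597:ℕ) = 7*228+1 by norm_num, show (2440:ℕ) = 10*244 by norm_num, pow_succ, pow_mul, pow_mul]; norm_num))
      (cert (3+(263/500 : ℝ)) (182279013/1250000000 : ℝ) (by norm_num) (by norm_num) (by rw [show (1597:ℕ) = 7*228+1 by norm_num, show (2440:ℕ) = 10*244 by norm_num, pow_succ, pow_mul, pow_mul]; norm_num))
      (cert (5+(263/500 : ℝ)) (183500223/2500000000 : ℝ) (by norm_num) (by norm_num) (by rw [show (1597:ℕ) = 7*228+1 by norm_num, show (2440:ℕ) = 10*244 by norm_num, pow_succ, pow_mul, pow_mul]; norm_num))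
      (by norm_num) (by norm_num) (by norm_num) x h10 h11)
  rcases le_total x (577/1000 : ℝ) with h12|h12
  · exact goal_form x (master (43/80 : ℝ) (577/1000 : ℝ) (5182887203/10000000000 : ℝ) (2410583899/10000000000 : ℝ) (1450995413/10000000000 : ℝ) (73167319/1000000000 : ℝ)
      (by norm_num) (by norm_num) (by norm_num) (by norm_num) (by norm_num) (by norm_num)
      (cert (1+(43/80 : ℝ)) (5182887203/10000000000 : ℝ) (by norm_num) (by norm_num) (by rw [show (1597:ℕ) = 7*228+1 by norm_num, show (2440:ℕ) = 10*244 by norm_num, pow_succ, pow_mul, pow_mul]; norm_num))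
      (cert (2+(43/80 : ℝ)) (2410583899/10000000000 : ℝ) (by norm_num) (by norm_num) (by rw [show (1597:ℕ) = 7*228+1 by norm_num, show (2440:ℕ) = 10*244 by norm_num, pow_succ, pow_mul, pow_mul]; norm_num))
      (cert (3+(43/80 : ℝ)) (1450995413/10000000000 : ℝ) (by norm_num) (by norm_num) (by rw [show (1597:ℕ) = 7*228+1 by norm_num, show (2440:ℕ) = 10*244 by norm_num, pow_succ, pow_mul, pow_mul]; norm_num))
      (cert (5+(43/80 : ℝ)) (73167319/1000000000 : ℝ) (by norm_num) (by norm_num) (by rw [show (1597:ℕ) = 7*228+1 by norm_num, show (2440:ℕ) = 10*244 by norm_num, pow_succ, pow_mul, pow_mul]; norm_num))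
      (by norm_num) (by norm_num) (by norm_num) x h11 h12)
  rcases le_total x (373/500 : ℝ) with h13|h13
  · exact goal_form x (master (577/1000 : ℝ) (373/500 : ℝ) (2492929141/5000000000 : ℝ) (2354359471/10000000000 : ℝ) (356646473/2500000000 : ℝ) (723770317/10000000000 : ℝ)
      (by norm_num) (by norm_num) (by norm_num) (by norm_num) (by norm_num) (by norm_num)
      (cert (1+(577/1000 : ℝ)) (2492929141/5000000000 : ℝ) (by norm_num) (by norm_num) (by rw [show (1597:ℕ) = 7*228+1 by norm_num, show (2440:ℕ) = 10*244 by norm_num, pow_succ, pow_mul, pow_mul]; norm_num))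
      (cert (2+(577/1000 : ℝ)) (2354359471/10000000000 : ℝ) (by norm_num) (by norm_num) (by rw [show (1597:ℕ) = 7*228+1 by norm_num, show (2440:ℕ) = 10*244 by norm_num, pow_succ, pow_mul, pow_mul]; norm_num))
      (cert (3+(577/1000 : ℝ)) (356646473/2500000000 : ℝ) (by norm_num) (by norm_num) (by rw [show (1597:ℕ) = 7*228+1 by norm_num, show (2440:ℕ) = 10*244 by norm_num, pow_succ, pow_mul, pow_mul]; norm_num))
      (cert (5+(577/1000 : ℝ)) (723770317/10000000000 : ℝ) (by norm_num) (by norm_num) (by rw [show (1597:ℕ) = 7*228+1 by norm_num, show (2440:ℕ) = 10*244 by norm_num, pow_succ, pow_mul, pow_mul]; norm_num))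
      (by norm_num) (by norm_num) (by norm_num) x h12 h13)
  · exact goal_form x (master (373/500 : ℝ) (1:ℝ) (4267653389/10000000000 : ℝ) (2136608351/10000000000 : ℝ) (332357917/2500000000 : ℝ) (138299953/2000000000 : ℝ)
      (by norm_num) (by norm_num) (by norm_num) (by norm_num) (by norm_num) (by norm_num)
      (cert (1+(373/500 : ℝ)) (4267653389/10000000000 : ℝ) (by norm_num) (by norm_num) (by rw [show (1597:ℕ) = 7*228+1 by norm_num, show (2440:ℕ) = 10*244 by norm_num, pow_succ, pow_mul, pow_mul]; norm_num))
      (cert (2+(373/500 : ℝ)) (2136608351/10000000000 : ℝ) (by norm_num) (by norm_num) (by rw [show (1597:ℕ) = 7*228+1 by norm_num, show (2440:ℕ) = 10*244 by norm_num, pow_succ, pow_mul, pow_mul]; norm_num))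
      (cert (3+(373/500 : ℝ)) (332357917/2500000000 : ℝ) (by norm_num) (by norm_num) (by rw [show (1597:ℕ) = 7*228+1 by norm_num, show (2440:ℕ) = 10*244 by norm_num, pow_succ, pow_mul, pow_mul]; norm_num))
      (cert (5+(373/500 : ℝ)) (138299953/2000000000 : ℝ) (by norm_num) (by norm_num) (by rw [show (1597:ℕ) = 7*228+1 by norm_num, show (2440:ℕ) = 10*244 by norm_num, pow_succ, pow_mul, pow_mul]; norm_num))
      (by norm_num) (by norm_num) (by norm_num) x h13 hx1)
end

section
/- Let t = 5/6 and f(x) = 1 - x/2 on [0,1]. Define E(x) = ∑_{n=2}^∞ f(1/(x+8n-7)) · (x+8n-7)^{-2t}. Then for all x ∈ [0,1], E(x) ≤ (3/16)·(1 - 1/(5·9^{5/3})). Moreover, sup_{x ∈ [0,1]} [f(1/(x+1))·(x+1)^{-5/3} + E(x)] / f(x) < 1. -/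
private lemma rpow_anti' {a b p : ℝ} (ha : 0 < a) (hab : a ≤ b) (hp : 0 ≤ p) :
    b ^ (-p) ≤ a ^ (-p) := by
  have hb : 0 < b := ha.trans_le hab
  rw [Real.rpow_neg ha.le, Real.rpow_neg hb.le]
  exact inv_anti₀ (Real.rpow_pos_of_pos ha p) (Real.rpow_le_rpow ha.le hab hp)

private lemma conv_ineq {y z : ℝ} (hy : 0 < y) (hyz : y ≤ z) :
    (2/3) * (z - y) * z ^ (-(5/3:ℝ)) ≤ y ^ (-(2/3:ℝ)) - z ^ (-(2/3:ℝ)) := by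
  have hz : 0 < z := hy.trans_le hyz
  set p := y ^ ((1:ℝ)/3) with hp'
  set q := z ^ ((1:ℝ)/3) with hq'
  have hp : 0 < p := Real.rpow_pos_of_pos hy _
  have hq : 0 < q := Real.rpow_pos_of_pos hz _
  have hpq : p ≤ q := Real.rpow_le_rpow hy.le hyz (by norm_num)
  have hy2 : y ^ (-(2/3:ℝ)) = (p ^ 2)⁻¹ := by
    rw [hp', ← Real.rpow_natCast (y ^ ((1:ℝ)/3)) 2, ← Real.rpow_mul hy.le,
      ← Real.rpow_neg hy.le]; norm_num
  have hz2 : z ^ (-(2/3:ℝ)) = (q ^ 2)⁻¹ := by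
    rw [hq', ← Real.rpow_natCast (z ^ ((1:ℝ)/3)) 2, ← Real.rpow_mul hz.le,
      ← Real.rpow_neg hz.le]; norm_num
  have hz5 : z ^ (-(5/3:ℝ)) = (q ^ 5)⁻¹ := by
    rw [hq', ← Real.rpow_natCast (z ^ ((1:ℝ)/3)) 5, ← Real.rpow_mul hz.le,
      ← Real.rpow_neg hz.le]; norm_num
  have hy3 : y = p ^ 3 := by
    rw [hp', ← Real.rpow_natCast (y ^ ((1:ℝ)/3)) 3, ← Real.rpow_mul hy.le]; norm_num
  have hz3 : z = q ^ 3 := by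
    rw [hq', ← Real.rpow_natCast (z ^ ((1:ℝ)/3)) 3, ← Real.rpow_mul hz.le]; norm_num
  rw [hy2, hz2, hz5]
  rw [hy3, hz3]
  have key : (p^2)⁻¹ - (q^2)⁻¹ - (2/3) * (q^3 - p^3) * (q^5)⁻¹
      = (q - p)^2 * (3*q^3 + 6*p*q^2 + 4*p^2*q + 2*p^3) / (3 * p^2 * q^5) := by
    field_simp
    ring
  have hpos : 0 ≤ (q - p)^2 * (3*q^3 + 6*p*q^2 + 4*p^2*q + 2*p^3) / (3 * p^2 * q^5) := by
    positivity
  linarith [key, hpos]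
private lemma tel (n : ℕ) :
    (8*(n:ℝ)+9) ^ (-(5/3:ℝ)) ≤
      (3/16) * ((8*(n:ℝ)+1) ^ (-(2/3:ℝ)) - (8*(n:ℝ)+9) ^ (-(2/3:ℝ))) := by
  have h := conv_ineq (y := 8*(n:ℝ)+1) (z := 8*(n:ℝ)+9) (by positivity) (by linarith)
  nlinarith [h]

private lemma nine23 : (4.32:ℝ) ≤ (9:ℝ) ^ ((2/3:ℝ)) := by
  have h : (4.32:ℝ) = ((4.32:ℝ)^(3:ℕ)) ^ ((1/3:ℝ)) := by
    rw [← Real.rpow_natCast (4.32:ℝ) 3, ← Real.rpow_mul (by norm_num)]; norm_num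
  have h9 : (9:ℝ) ^ ((2/3:ℝ)) = ((81:ℝ)) ^ ((1/3:ℝ)) := by
    rw [show (81:ℝ) = (9:ℝ)^(2:ℕ) by norm_num, ← Real.rpow_natCast (9:ℝ) 2,
      ← Real.rpow_mul (by norm_num)]; norm_num
  rw [h, h9]
  exact Real.rpow_le_rpow (by positivity) (by norm_num) (by norm_num)

private lemma nine23' : ((9:ℝ) ^ (-(2/3:ℝ))) ≤ 1/4.32 := by
  rw [Real.rpow_neg (by norm_num)]
  rw [inv_eq_one_div]
  exact one_div_le_one_div_of_le (by norm_num) nine23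

private lemma partial_bound (N : ℕ) :
    ∑ n ∈ Finset.range N, (8*(n:ℝ)+9) ^ (-(5/3:ℝ)) ≤ 7/100 := by
  set B : ℕ → ℝ := fun n => (3/16) * (8*(n:ℝ)+1) ^ (-(2/3:ℝ)) with hB
  set a : ℕ → ℝ := fun n => (8*(n:ℝ)+9) ^ (-(5/3:ℝ)) with ha
  have hB1 : B 1 ≤ (3/16) * (1/4.32) := by
    simp only [hB]
    have : (8*((1:ℕ):ℝ)+1) = (9:ℝ) := by norm_num
    rw [this]
    nlinarith [nine23']
  have ha0 : a 0 ≤ (1/4.32) * (1/9) := by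
    simp only [ha]
    have : (8*((0:ℕ):ℝ)+9) = (9:ℝ) := by norm_num
    rw [this]
    have e : (9:ℝ) ^ (-(5/3:ℝ)) = (9:ℝ) ^ (-(2/3:ℝ)) * (9:ℝ) ^ (-(1:ℝ)) := by
      rw [← Real.rpow_add (by norm_num)]; norm_num
    rw [e, Real.rpow_neg_one]
    have h2 : (0:ℝ) ≤ (9:ℝ) ^ (-(2/3:ℝ)) := Real.rpow_nonneg (by norm_num) _
    nlinarith [nine23']
  match N with
  | 0 => simp; norm_num
  | (M+1) =>
    rw [Finset.sum_range_succ']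
    have step : ∀ i ∈ Finset.range M, a (i+1) ≤ B (i+1) - B (i+2) := by
      intro i _
      have h := tel (i+1)
      have e1 : (8*((i:ℝ)+1)+1) = 8*(((i:ℕ)+1:ℕ):ℝ)+1 := by push_cast; ring
      simp only [ha, hB]
      push_cast
      push_cast at h
      rw [show (8*((i:ℝ)+1)+9) = 8*((i:ℝ)+2)+1 by ring] at h ⊢
      linarith [h]
    have h1 : ∑ i ∈ Finset.range M, a (i+1) ≤ ∑ i ∈ Finset.range M, (B (i+1) - B (i+2)) :=
      Finset.sum_le_sum step
    have h2 : ∑ i ∈ Finset.range M, (B (i+1) - B (i+2)) = B 1 - B (M+1) := by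
      exact Finset.sum_range_sub' (fun i => B (i+1)) M
    have hBpos : 0 ≤ B (M+1) := by
      simp only [hB]; positivity
    calc ∑ i ∈ Finset.range M, a (i+1) + a 0 ≤ (B 1 - B (M+1)) + a 0 := by
          rw [← h2]; linarith
      _ ≤ B 1 + a 0 := by linarith
      _ ≤ (3/16) * (1/4.32) + (1/4.32) * (1/9) := by linarith
      _ ≤ 7/100 := by norm_num

private lemma term_bound {x : ℝ} (hx0 : 0 ≤ x) (n : ℕ) :
    (1 - (1 / (x + 8 * ((n:ℝ) + 2) - 7)) / 2) * (x + 8 * ((n:ℝ) + 2) - 7) ^ (-(5/3 : ℝ))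
      ≤ (8*(n:ℝ)+9) ^ (-(5/3:ℝ)) := by
  have hA9 : (8*(n:ℝ)+9) ≤ x + 8 * ((n:ℝ) + 2) - 7 := by
    have : (0:ℝ) ≤ (n:ℝ) := Nat.cast_nonneg n
    linarith
  have hApos : (0:ℝ) < x + 8 * ((n:ℝ) + 2) - 7 := by
    have : (0:ℝ) ≤ (n:ℝ) := Nat.cast_nonneg n
    linarith
  have h1 : (1 - (1 / (x + 8 * ((n:ℝ) + 2) - 7)) / 2) ≤ 1 := by
    have : 0 ≤ 1 / (x + 8 * ((n:ℝ) + 2) - 7) := by positivity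
    linarith
  have h2 : (0:ℝ) ≤ (x + 8 * ((n:ℝ) + 2) - 7) ^ (-(5/3 : ℝ)) :=
    Real.rpow_nonneg hApos.le _
  calc (1 - (1 / (x + 8 * ((n:ℝ) + 2) - 7)) / 2) * (x + 8 * ((n:ℝ) + 2) - 7) ^ (-(5/3 : ℝ))
      ≤ (x + 8 * ((n:ℝ) + 2) - 7) ^ (-(5/3 : ℝ)) := mul_le_of_le_one_left h2 h1
    _ ≤ (8*(n:ℝ)+9) ^ (-(5/3:ℝ)) := by
        have := rpow_anti' (a := 8*(n:ℝ)+9) (b := x + 8 * ((n:ℝ) + 2) - 7)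
          (by positivity) hA9 (by norm_num : (0:ℝ) ≤ 5/3)
        exact this

private lemma term_nonneg {x : ℝ} (hx0 : 0 ≤ x) (n : ℕ) :
    0 ≤ (1 - (1 / (x + 8 * ((n:ℝ) + 2) - 7)) / 2) * (x + 8 * ((n:ℝ) + 2) - 7) ^ (-(5/3 : ℝ)) := by
  have hApos : (0:ℝ) < x + 8 * ((n:ℝ) + 2) - 7 := by
    have : (0:ℝ) ≤ (n:ℝ) := Nat.cast_nonneg n
    linarith
  have h9 : (1:ℝ) ≤ x + 8 * ((n:ℝ) + 2) - 7 := by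
    have : (0:ℝ) ≤ (n:ℝ) := Nat.cast_nonneg n
    linarith
  have h1 : 1 / (x + 8 * ((n:ℝ) + 2) - 7) ≤ 1 := by
    rw [div_le_one hApos]; linarith
  have h2 : (0:ℝ) ≤ (x + 8 * ((n:ℝ) + 2) - 7) ^ (-(5/3 : ℝ)) :=
    Real.rpow_nonneg hApos.le _
  have h3 : (0:ℝ) ≤ 1 - (1 / (x + 8 * ((n:ℝ) + 2) - 7)) / 2 := by linarith
  positivity

private lemma nine53 : (38.8:ℝ) ≤ (9:ℝ) ^ ((5/3:ℝ)) := by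
  have e : (9:ℝ) ^ ((5/3:ℝ)) = (9:ℝ) ^ ((2/3:ℝ)) * 9 := by
    rw [show (5/3:ℝ) = 2/3 + 1 by norm_num, Real.rpow_add (by norm_num), Real.rpow_one]
  rw [e]
  nlinarith [nine23]

theorem stmt5 :
    let f : ℝ → ℝ := fun y => 1 - y / 2
    let E : ℝ → ℝ := fun x =>
      ∑' n : ℕ, f (1 / (x + 8 * ((n:ℝ) + 2) - 7)) * (x + 8 * ((n:ℝ) + 2) - 7) ^ (-(5/3 : ℝ))
    (∀ x ∈ Set.Icc (0:ℝ) 1,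
      E x ≤ (3/16) * (1 - 1 / (5 * (9:ℝ) ^ ((5/3 : ℝ))))) ∧
    (∃ c : ℝ, c < 1 ∧ ∀ x ∈ Set.Icc (0:ℝ) 1,
      (f (1 / (x + 1)) * (x + 1) ^ (-(5/3 : ℝ)) + E x) / f x ≤ c) := by
  intro f E
  have hE : ∀ x ∈ Set.Icc (0:ℝ) 1, E x ≤ 7/100 := by
    intro x hx
    obtain ⟨hx0, hx1⟩ := hx
    simp only [E, f]
    refine Real.tsum_le_of_sum_range_le (fun n => term_nonneg hx0 n) (fun N => ?_)
    calc ∑ n ∈ Finset.range N,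
          (1 - (1 / (x + 8 * ((n:ℝ) + 2) - 7)) / 2) * (x + 8 * ((n:ℝ) + 2) - 7) ^ (-(5/3 : ℝ))
        ≤ ∑ n ∈ Finset.range N, (8*(n:ℝ)+9) ^ (-(5/3:ℝ)) :=
          Finset.sum_le_sum (fun n _ => term_bound hx0 n)
      _ ≤ 7/100 := partial_bound N
  constructor
  · intro x hx
    refine (hE x hx).trans ?_
    have h53 : (38.8:ℝ) ≤ (9:ℝ) ^ ((5/3:ℝ)) := nine53
    have hpos : (0:ℝ) < (9:ℝ) ^ ((5/3:ℝ)) := Real.rpow_pos_of_pos (by norm_num) _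
    have h1 : 1 / (5 * (9:ℝ) ^ ((5/3:ℝ))) ≤ 1 / (5 * 38.8) := by
      apply one_div_le_one_div_of_le (by norm_num)
      nlinarith
    nlinarith [h1]
  · refine ⟨19/20, by norm_num, ?_⟩
    intro x hx
    obtain ⟨hx0, hx1⟩ := hx
    have hxpos : (0:ℝ) < x + 1 := by linarith
    have hden : (0:ℝ) < f x := by simp only [f]; linarith
    rw [div_le_iff₀ hden]
    have hstep1 : (x+1) ^ (-(5/3:ℝ)) ≤ (x+1)⁻¹ := by
      have := Real.rpow_le_rpow_of_exponent_le (by linarith : (1:ℝ) ≤ x+1)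
        (by norm_num : (-(5/3:ℝ)) ≤ -1)
      rwa [Real.rpow_neg_one] at this
    have hf1 : 0 ≤ f (1/(x+1)) := by
      simp only [f]
      have h1 : 1/(x+1) ≤ 1 := by rw [div_le_one hxpos]; linarith
      linarith
    have hnum1 : f (1/(x+1)) * (x + 1) ^ (-(5/3:ℝ)) ≤ f (1/(x+1)) * (x+1)⁻¹ :=
      mul_le_mul_of_nonneg_left hstep1 hf1
    have key : (1 - (1/(x+1))/2) * (x+1)⁻¹ + 7/100 ≤ 19/20 * (1 - x/2) := by
      have e : 19/20 * (1 - x/2) - ((1 - (1/(x+1))/2) * (x+1)⁻¹ + 7/100)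
          = (-95*(x+1)^3 + 271*(x+1)^2 - 200*(x+1) + 100) / (200*(x+1)^2) := by
        field_simp
        ring
      have hnum : (0:ℝ) ≤ -95*(x+1)^3 + 271*(x+1)^2 - 200*(x+1) + 100 := by
        nlinarith [mul_nonneg (mul_nonneg hx0 (by linarith : (0:ℝ) ≤ 1 - x))
          (by linarith : (0:ℝ) ≤ 95*x + 109)]
      have hpos : (0:ℝ) ≤ (-95*(x+1)^3 + 271*(x+1)^2 - 200*(x+1) + 100) / (200*(x+1)^2) := by
        positivity
      linarith [e, hpos]
    have hEx := hE x ⟨hx0, hx1⟩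
    simp only [f] at hnum1 ⊢
    calc (1 - (1/(x+1))/2) * (x + 1) ^ (-(5/3:ℝ)) + E x
        ≤ (1 - (1/(x+1))/2) * (x+1)⁻¹ + 7/100 := by linarith
      _ ≤ 19/20 * (1 - x/2) := key
end
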